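/- Let (X, cl) be a finitary matroid with rank rk and δ a quasi-endomorphism. For a ∈ X and B ⊆ X: a ∉ cl^δ(B) if and only if the sequence (δⁱa)_{i<ω} is independent over cl(J^∞(B)), i.e. for every n, δⁿa ∉ cl({a, δa, …, δ^{n−1}a} ∪ J^∞(B)). -/

import Mathlib

/-- A finitary matroid (pregeometry) on a type `X`, given by a closure operator. -/
structure Pregeometry (X : Type*) where
  cl : Set X → Set X
  subset_cl : ∀ A : Set X, A ⊆ cl A
  mono : ∀ A B : Set X, A ⊆ B → cl A ⊆ cl B
  cl_cl : ∀ A : Set X, cl (cl A) = cl A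
  finitary : ∀ (A : Set X) (a : X), a ∈ cl A → ∃ F : Finset X, ↑F ⊆ A ∧ a ∈ cl ↑F
  exchange : ∀ (a b : X) (A : Set X), a ∈ cl (A ∪ {b}) → a ∉ cl A → b ∈ cl (A ∪ {a})

/-- `S` is independent over `B` with respect to a closure operator. -/
def clIndep {X : Type*} (cl : Set X → Set X) (B S : Set X) : Prop :=
  ∀ s ∈ S, s ∉ cl (B ∪ (S \ {s}))

/-- The rank of `A` over `B` with respect to a closure operator: the supremum of the
cardinalities of subsets of `A` independent over `B`. -/
noncomputable def clRank {X : Type*} (cl : Set X → Set X) (A B : Set X) : Cardinal :=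
  ⨆ S : {S : Set X // S ⊆ A ∧ clIndep cl B S}, Cardinal.mk S.1

/-- The set of all iterated images `δⁱ a` for `a ∈ A`, `i < ω` (the infinite jet). -/
def Jinf {X : Type*} (δ : X → X) (A : Set X) : Set X :=
  ⋃ a ∈ A, Set.range fun i : ℕ => δ^[i] a

/-- The jet `{δⁱ a : a ∈ A, i ≤ n}`. -/
def Jle {X : Type*} (δ : X → X) (A : Set X) (n : ℕ) : Set X :=
  ⋃ a ∈ A, (fun i : ℕ => δ^[i] a) '' {i | i ≤ n}

/-- The jet `{δⁱ a : a ∈ A, i < n}` (so `Jlt δ A 0 = ∅`, playing the role of `J^{-1}`). -/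
def Jlt {X : Type*} (δ : X → X) (A : Set X) (n : ℕ) : Set X :=
  ⋃ a ∈ A, (fun i : ℕ => δ^[i] a) '' {i | i < n}

/-- `δ` is a quasi-endomorphism of the pregeometry `P`:
`rk(δA | A ∪ B ∪ δB) ≤ rk(A | B)` for all `A, B`. -/
def IsQuasiEndo {X : Type*} (P : Pregeometry X) (δ : X → X) : Prop :=
  ∀ A B : Set X, clRank P.cl (δ '' A) (A ∪ B ∪ δ '' B) ≤ clRank P.cl A B

/-- The `δ`-closure operator: `a ∈ cl^δ(B)` iff `rk(J^∞(a) | J^∞(B))` is finite. -/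
noncomputable def clDelta {X : Type*} (P : Pregeometry X) (δ : X → X) : Set X → Set X :=
  fun B => {a | clRank P.cl (Jinf δ {a}) (Jinf δ B) < Cardinal.aleph0}

section Aux

variable {X : Type*}

lemma cl_subset_cl' (P : Pregeometry X) {A D : Set X} (h : A ⊆ P.cl D) :
    P.cl A ⊆ P.cl D := by
  have := P.mono A (P.cl D) h
  rwa [P.cl_cl] at this

lemma exists_exchange' [DecidableEq X] (P : Pregeometry X) (s : X) (C : Set X) :
    ∀ F : Finset X, s ∈ P.cl (C ∪ ↑F) → s ∉ P.cl C →
      ∃ f ∈ F, f ∈ P.cl ((C ∪ {s}) ∪ ↑(F.erase f)) := by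
  classical
  intro F
  induction F using Finset.induction_on with
  | empty =>
    intro hs hns
    simp only [Finset.coe_empty, Set.union_empty] at hs
    exact absurd hs hns
  | @insert g F' hg ih =>
    intro hs hns
    by_cases hcase : s ∈ P.cl (C ∪ ↑F')
    · obtain ⟨f, hf, hfc⟩ := ih hcase hns
      refine ⟨f, Finset.mem_insert_of_mem hf, ?_⟩
      refine P.mono _ _ (Set.union_subset_union_right _ ?_) hfc
      exact_mod_cast Finset.erase_subset_erase f (Finset.subset_insert g F')
    · have hs' : s ∈ P.cl ((C ∪ ↑F') ∪ {g}) := by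
        refine P.mono _ _ ?_ hs
        intro x hx
        simp only [Finset.coe_insert, Set.mem_union, Set.mem_insert_iff,
          Set.mem_singleton_iff, Finset.mem_coe] at hx ⊢
        tauto
      have hex := P.exchange s g (C ∪ ↑F') hs' hcase
      refine ⟨g, Finset.mem_insert_self g F', ?_⟩
      refine P.mono _ _ ?_ hex
      rw [Finset.erase_insert hg]
      intro x hx
      simp only [Set.mem_union, Set.mem_singleton_iff, Finset.mem_coe] at hx ⊢
      tauto

lemma steinitz' [DecidableEq X] (P : Pregeometry X) :
    ∀ (S : Finset X) (C : Set X) (F : Finset X),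
      clIndep P.cl C ↑S → ↑S ⊆ P.cl (C ∪ ↑F) → S.card ≤ F.card := by
  classical
  intro S
  induction S using Finset.induction_on with
  | empty => intro C F _ _; simp
  | @insert s S hsS ih =>
    intro C F hindep hspan
    have hsC : s ∉ P.cl C := by
      intro h
      exact hindep s (by simp) (P.mono _ _ Set.subset_union_left h)
    have hsF : s ∈ P.cl (C ∪ ↑F) := hspan (by simp)
    obtain ⟨f, hfF, hfc⟩ := exists_exchange' P s C F hsF hsC
    have hspan2 : P.cl (C ∪ ↑F) ⊆ P.cl ((C ∪ {s}) ∪ ↑(F.erase f)) := by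
      apply cl_subset_cl' P
      intro x hx
      rcases hx with hx | hx
      · exact P.subset_cl _ (Or.inl (Or.inl hx))
      · by_cases hxf : x = f
        · subst hxf; exact hfc
        · exact P.subset_cl _
            (Or.inr (Finset.mem_coe.mpr (Finset.mem_erase.mpr ⟨hxf, Finset.mem_coe.mp hx⟩)))
    have hindep2 : clIndep P.cl (C ∪ {s}) ↑S := by
      intro t ht hc
      have hst : ¬ s = t := fun h => hsS (by rw [h]; exact Finset.mem_coe.mp ht)
      refine hindep t (by simp [ht]) (P.mono _ _ ?_ hc)
      intro x hx
      simp only [Set.mem_union, Set.mem_singleton_iff, Set.mem_diff,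
        Finset.coe_insert, Set.mem_insert_iff, Finset.mem_coe] at hx ⊢
      rcases hx with (hx | rfl) | ⟨hx, hxt⟩
      · exact Or.inl hx
      · exact Or.inr ⟨Or.inl rfl, hst⟩
      · exact Or.inr ⟨Or.inr hx, hxt⟩
    have hspan3 : ↑S ⊆ P.cl ((C ∪ {s}) ∪ ↑(F.erase f)) := by
      intro x hx
      exact hspan2 (hspan (by simp [hx]))
    have hle := ih (C ∪ {s}) (F.erase f) hindep2 hspan3
    have hcf : 0 < F.card := Finset.card_pos.mpr ⟨f, hfF⟩
    have hce : (F.erase f).card = F.card - 1 := Finset.card_erase_of_mem hfF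
    rw [Finset.card_insert_of_notMem hsS]
    omega

lemma clIndep_empty' (cl : Set X → Set X) (B : Set X) : clIndep cl B ∅ :=
  fun s hs => absurd hs (Set.notMem_empty s)

lemma le_clRank' (cl : Set X → Set X) {A B S : Set X} (hS : S ⊆ A) (hi : clIndep cl B S) :
    Cardinal.mk S ≤ clRank cl A B :=
  le_ciSup (Cardinal.bddAbove_range
    (fun S : {S : Set X // S ⊆ A ∧ clIndep cl B S} => Cardinal.mk S.1)) ⟨S, hS, hi⟩

lemma clRank_le' (cl : Set X → Set X) {A B : Set X} {c : Cardinal}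
    (h : ∀ S : Set X, S ⊆ A → clIndep cl B S → Cardinal.mk S ≤ c) :
    clRank cl A B ≤ c := by
  haveI : Nonempty {S : Set X // S ⊆ A ∧ clIndep cl B S} :=
    ⟨⟨∅, Set.empty_subset A, clIndep_empty' cl B⟩⟩
  exact ciSup_le fun S => h S.1 S.2.1 S.2.2

lemma clRank_eq_zero' (P : Pregeometry X) {A B : Set X} (h : A ⊆ P.cl B) :
    clRank P.cl A B = 0 := by
  refine le_antisymm (clRank_le' _ fun S hS hi => ?_) (zero_le)
  have hSe : S = ∅ := by
    by_contra hne
    obtain ⟨s, hs⟩ := Set.nonempty_iff_ne_empty.mpr hne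
    exact hi s hs (P.mono _ _ Set.subset_union_left (h (hS hs)))
  simp [hSe]

lemma mem_cl_of_clRank_eq_zero' (P : Pregeometry X) {A B : Set X} {x : X}
    (h : clRank P.cl A B = 0) (hx : x ∈ A) : x ∈ P.cl B := by
  by_contra hxc
  have hi : clIndep P.cl B {x} := by
    intro s hs
    rw [Set.mem_singleton_iff] at hs
    subst hs
    simpa using hxc
  have hle := le_clRank' P.cl (Set.singleton_subset_iff.mpr hx) hi
  rw [h, Cardinal.mk_singleton] at hle
  exact absurd hle (by simp)

lemma Jinf_singleton' (δ : X → X) (a : X) :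
    Jinf δ {a} = Set.range fun i : ℕ => δ^[i] a := by simp [Jinf]

lemma Jlt_singleton' (δ : X → X) (a : X) (n : ℕ) :
    Jlt δ {a} n = (fun i : ℕ => δ^[i] a) '' {i | i < n} := by simp [Jlt]

lemma mem_Jlt_singleton' {δ : X → X} {a : X} {n i : ℕ} (h : i < n) :
    δ^[i] a ∈ Jlt δ {a} n := by
  rw [Jlt_singleton']; exact ⟨i, h, rfl⟩

lemma Jlt_succ_singleton' (δ : X → X) (a : X) (n : ℕ) :
    Jlt δ {a} (n + 1) = insert (δ^[n] a) (Jlt δ {a} n) := by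
  rw [Jlt_singleton', Jlt_singleton']
  ext x
  simp only [Set.mem_image, Set.mem_setOf_eq, Set.mem_insert_iff]
  constructor
  · rintro ⟨i, hi, rfl⟩
    rcases Nat.lt_succ_iff_lt_or_eq.mp hi with hi | rfl
    · exact Or.inr ⟨i, hi, rfl⟩
    · exact Or.inl rfl
  · rintro (rfl | ⟨i, hi, rfl⟩)
    · exact ⟨n, Nat.lt_succ_self n, rfl⟩
    · exact ⟨i, Nat.lt_succ_of_lt hi, rfl⟩

lemma Jlt_le_singleton' (δ : X → X) (a : X) {m n : ℕ} (h : m ≤ n) :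
    Jlt δ {a} m ⊆ Jlt δ {a} n := by
  rw [Jlt_singleton', Jlt_singleton']
  exact Set.image_mono fun i hi => lt_of_lt_of_le hi h

lemma image_delta_Jinf' (δ : X → X) (B : Set X) : δ '' Jinf δ B ⊆ Jinf δ B := by
  rintro x ⟨y, hy, rfl⟩
  simp only [Jinf, Set.mem_iUnion, Set.mem_range] at hy ⊢
  obtain ⟨b, hb, i, rfl⟩ := hy
  exact ⟨b, hb, i + 1, Function.iterate_succ_apply' δ i b⟩

end Aux

section Main

variable {X : Type*}

lemma seq_claim' [DecidableEq X] (P : Pregeometry X) (δ : X → X) (a : X) (C : Set X)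
    (H : ∀ n : ℕ, δ^[n] a ∉ P.cl (Jlt δ {a} n ∪ C)) :
    ∀ G : Finset ℕ, ∀ n : ℕ, n ∉ G →
      δ^[n] a ∉ P.cl (C ∪ ↑(G.image fun i : ℕ => δ^[i] a)) := by
  classical
  intro G
  induction G using Finset.strongInduction with
  | _ G ih =>
    intro n hn hmem
    rcases G.eq_empty_or_nonempty with rfl | hne
    · simp only [Finset.image_empty, Finset.coe_empty, Set.union_empty] at hmem
      exact H n (P.mono _ _ Set.subset_union_right hmem)
    · have hmG : G.max' hne ∈ G := G.max'_mem hne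
      rcases lt_or_gt_of_ne (show G.max' hne ≠ n from fun h => hn (h ▸ hmG)) with hlt | hgt
      · refine H n (P.mono _ _ ?_ hmem)
        intro x hx
        rcases hx with hx | hx
        · exact Or.inr hx
        · obtain ⟨i, hiG, rfl⟩ := Finset.mem_image.mp (Finset.mem_coe.mp hx)
          exact Or.inl (mem_Jlt_singleton' (lt_of_le_of_lt (G.le_max' i hiG) hlt))
      · have hss : G.erase (G.max' hne) ⊂ G := Finset.erase_ssubset hmG
        have hnotin : δ^[n] a ∉ P.cl (C ∪ ↑((G.erase (G.max' hne)).image fun i : ℕ => δ^[i] a)) :=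
          ih _ hss n (fun h => hn (Finset.mem_of_mem_erase h))
        have hrw : G.image (fun i : ℕ => δ^[i] a)
            = insert (δ^[G.max' hne] a) ((G.erase (G.max' hne)).image fun i : ℕ => δ^[i] a) := by
          conv_lhs => rw [← Finset.insert_erase hmG]
          rw [Finset.image_insert]
        rw [hrw] at hmem
        have hmem' : δ^[n] a ∈ P.cl ((C ∪ ↑((G.erase (G.max' hne)).image fun i : ℕ => δ^[i] a))
            ∪ {δ^[G.max' hne] a}) := by
          refine P.mono _ _ ?_ hmem
          intro x hx
          simp only [Finset.coe_insert, Set.mem_union, Set.mem_insert_iff,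
            Set.mem_singleton_iff, Finset.mem_coe] at hx ⊢
          tauto
        have hex := P.exchange _ _ _ hmem' hnotin
        refine H (G.max' hne) (cl_subset_cl' P ?_ hex)
        intro x hx
        rcases hx with (hx | hx) | hx
        · exact P.subset_cl _ (Or.inr hx)
        · obtain ⟨i, hiG', rfl⟩ := Finset.mem_image.mp (Finset.mem_coe.mp hx)
          have hilt : i < G.max' hne :=
            lt_of_le_of_ne (G.le_max' i (Finset.mem_of_mem_erase hiG'))
              (Finset.ne_of_mem_erase hiG')
          exact P.subset_cl _ (Or.inl (mem_Jlt_singleton' hilt))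
        · rw [Set.mem_singleton_iff.mp hx]
          exact P.subset_cl _ (Or.inl (mem_Jlt_singleton' hgt))

lemma seq_inj' (P : Pregeometry X) (δ : X → X) (a : X) (C : Set X)
    (H : ∀ n : ℕ, δ^[n] a ∉ P.cl (Jlt δ {a} n ∪ C)) :
    Function.Injective fun i : ℕ => δ^[i] a := by
  have key : ∀ m n : ℕ, m < n → δ^[m] a ≠ δ^[n] a := by
    intro m n hmn heq
    exact H n (P.subset_cl _ (Or.inl (heq ▸ mem_Jlt_singleton' hmn)))
  intro m n h
  rcases lt_trichotomy m n with h' | h' | h'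
  · exact absurd h (key m n h')
  · exact h'
  · exact absurd h.symm (key n m h')

lemma seq_indep' (P : Pregeometry X) (δ : X → X) (a : X) (C : Set X)
    (H : ∀ n : ℕ, δ^[n] a ∉ P.cl (Jlt δ {a} n ∪ C)) :
    clIndep P.cl C (Set.range fun i : ℕ => δ^[i] a) := by
  classical
  intro s hs hmem
  obtain ⟨n, rfl⟩ := hs
  obtain ⟨F0, hF0, hmemF0⟩ := P.finitary _ _ hmem
  set T := F0.filter (fun x => x ∈ Set.range (fun i : ℕ => δ^[i] a) \ {δ^[n] a}) with hT
  have hTsub : ↑T ⊆ (fun i : ℕ => δ^[i] a) '' Set.univ := by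
    intro x hx
    rw [Set.image_univ]
    exact (Finset.mem_filter.mp (Finset.mem_coe.mp hx)).2.1
  obtain ⟨G, -, hGT⟩ := Finset.subset_set_image_iff.mp hTsub
  have hnG : n ∉ G := by
    intro hnG
    have hfn : δ^[n] a ∈ T := hGT ▸ Finset.mem_image_of_mem _ hnG
    exact (Finset.mem_filter.mp hfn).2.2 rfl
  refine seq_claim' P δ a C H G n hnG ?_
  rw [hGT]
  refine P.mono _ _ ?_ hmemF0
  intro x hx
  rcases hF0 hx with hx' | hx'
  · exact Or.inl hx'
  · exact Or.inr (Finset.mem_coe.mpr (Finset.mem_filter.mpr ⟨Finset.mem_coe.mp hx, hx'⟩))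

end Main

section Final

variable {X : Type*}

lemma clRank_le_nat' (P : Pregeometry X) (δ : X → X) (hδ : IsQuasiEndo P δ)
    (a : X) (B : Set X) (n : ℕ)
    (hn : δ^[n] a ∈ P.cl (Jlt δ {a} n ∪ Jinf δ B)) :
    clRank P.cl (Jinf δ {a}) (Jinf δ B) ≤ (n : Cardinal) := by
  classical
  have stepA : ∀ k : ℕ, δ^[n + k] a ∈ P.cl (Jlt δ {a} (n + k) ∪ Jinf δ B) := by
    intro k
    induction k with
    | zero => exact hn
    | succ k ihk =>
      have h0 : clRank P.cl {δ^[n + k] a} (Jlt δ {a} (n + k) ∪ Jinf δ B) = 0 :=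
        clRank_eq_zero' P (Set.singleton_subset_iff.mpr ihk)
      have h1 := hδ {δ^[n + k] a} (Jlt δ {a} (n + k) ∪ Jinf δ B)
      rw [h0] at h1
      have h2 := le_antisymm h1 (zero_le)
      have h3 : δ (δ^[n + k] a) ∈ P.cl ({δ^[n + k] a} ∪ (Jlt δ {a} (n + k) ∪ Jinf δ B)
          ∪ δ '' (Jlt δ {a} (n + k) ∪ Jinf δ B)) :=
        mem_cl_of_clRank_eq_zero' P h2 ⟨δ^[n + k] a, rfl, rfl⟩
      have h4 : δ^[n + (k + 1)] a = δ (δ^[n + k] a) := Function.iterate_succ_apply' δ (n + k) a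
      rw [h4]
      refine P.mono _ _ ?_ h3
      intro x hx
      rcases hx with (hx | hx) | hx
      · rw [Set.mem_singleton_iff.mp hx]
        exact Or.inl (mem_Jlt_singleton' (Nat.lt_succ_self (n + k)))
      · rcases hx with hx | hx
        · exact Or.inl (Jlt_le_singleton' δ a (Nat.le_succ (n + k)) hx)
        · exact Or.inr hx
      · obtain ⟨y, hy, rfl⟩ := hx
        rcases hy with hy | hy
        · rw [Jlt_singleton'] at hy
          obtain ⟨i, hi, rfl⟩ := hy
          have : δ (δ^[i] a) = δ^[i + 1] a := (Function.iterate_succ_apply' δ i a).symm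
          rw [this]
          exact Or.inl (mem_Jlt_singleton' (Nat.succ_lt_succ hi))
        · exact Or.inr (image_delta_Jinf' δ B ⟨y, hy, rfl⟩)
  have clmono : ∀ k : ℕ, P.cl (Jlt δ {a} (n + k) ∪ Jinf δ B) ⊆ P.cl (Jlt δ {a} n ∪ Jinf δ B) := by
    intro k
    induction k with
    | zero => exact subset_rfl
    | succ k ihk =>
      apply cl_subset_cl' P
      rw [show n + (k + 1) = (n + k) + 1 from rfl, Jlt_succ_singleton']
      intro x hx
      rcases hx with hx | hx
      · rcases hx with rfl | hx
        · exact ihk (stepA k)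
        · exact ihk (P.subset_cl _ (Or.inl hx))
      · exact P.subset_cl _ (Or.inr hx)
  have memD : ∀ m : ℕ, δ^[m] a ∈ P.cl (Jlt δ {a} n ∪ Jinf δ B) := by
    intro m
    rcases lt_or_ge m n with h | h
    · exact P.subset_cl _ (Or.inl (mem_Jlt_singleton' h))
    · obtain ⟨k, rfl⟩ := Nat.exists_eq_add_of_le h
      exact clmono k (stepA k)
  refine clRank_le' _ fun S hS hi => ?_
  have hFn : ((Finset.range n).image fun i : ℕ => δ^[i] a).card ≤ n :=
    le_trans Finset.card_image_le (by simp)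
  have hJlt : Jinf δ B ∪ ↑((Finset.range n).image fun i : ℕ => δ^[i] a)
      = Jlt δ {a} n ∪ Jinf δ B := by
    rw [Finset.coe_image, Finset.coe_range, Jlt_singleton', Set.union_comm]
    rfl
  have hbound : ∀ T : Finset X, ↑T ⊆ S → T.card ≤ n := by
    intro T hT
    refine le_trans (steinitz' P T (Jinf δ B) ((Finset.range n).image fun i : ℕ => δ^[i] a)
      ?_ ?_) hFn
    · intro t ht hc
      refine hi t (hT ht) (P.mono _ _ ?_ hc)
      exact Set.union_subset_union_right _ (Set.diff_subset_diff_left hT)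
    · intro t ht
      rw [hJlt]
      have htA := hS (hT ht)
      rw [Jinf_singleton'] at htA
      obtain ⟨m, rfl⟩ := htA
      exact memD m
  have hSfin : S.Finite := by
    by_contra hinf
    obtain ⟨T, hT, hcard⟩ := Set.Infinite.exists_subset_card_eq hinf (n + 1)
    have := hbound T hT
    omega
  have hseq : S = ↑hSfin.toFinset := hSfin.coe_toFinset.symm
  have hcard := hbound hSfin.toFinset (by rw [Set.Finite.coe_toFinset])
  have hmk : Cardinal.mk ↥S = (hSfin.toFinset.card : Cardinal) := by
    exact (Cardinal.mk_congr (Equiv.setCongr hseq)).trans Cardinal.mk_coe_finset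
  rw [hmk]
  exact_mod_cast hcard

theorem not_mem_clDelta_iff_indep' {X : Type*} (P : Pregeometry X) (δ : X → X)
    (hδ : IsQuasiEndo P δ) (a : X) (B : Set X) :
    ¬ (clRank P.cl (Jinf δ {a}) (Jinf δ B) < Cardinal.aleph0) ↔
      ∀ n : ℕ, δ^[n] a ∉ P.cl (Jlt δ {a} n ∪ Jinf δ B) := by
  constructor
  · intro hnot n
    by_contra hmem
    exact hnot (lt_of_le_of_lt (clRank_le_nat' P δ hδ a B n hmem) (Cardinal.nat_lt_aleph0 n))
  · intro H hmem
    have hindep := seq_indep' P δ a (Jinf δ B) H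
    have h1 : Cardinal.aleph0 ≤ Cardinal.mk ↥(Set.range fun i : ℕ => δ^[i] a) :=
      Cardinal.aleph0_le_mk_iff.mpr (Set.infinite_coe_iff.mpr
        (Set.infinite_range_of_injective (seq_inj' P δ a (Jinf δ B) H)))
    have h2 := le_clRank' P.cl (by rw [Jinf_singleton'] : Set.range (fun i : ℕ => δ^[i] a) ⊆ Jinf δ {a}) hindep
    exact absurd hmem (not_lt.mpr (h1.trans h2))

end Final

/-- `a ∉ cl^δ(B)` if and only if the sequence `(δⁱ a)` is independent over
`cl(J^∞(B))`: for every `n`, `δⁿ a ∉ cl({a, δa, …, δ^{n-1}a} ∪ J^∞(B))`. -/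
theorem not_mem_clDelta_iff_indep {X : Type*} (P : Pregeometry X) (δ : X → X)
    (hδ : IsQuasiEndo P δ) (a : X) (B : Set X) :
    a ∉ clDelta P δ B ↔
      ∀ n : ℕ, δ^[n] a ∉ P.cl (Jlt δ {a} n ∪ Jinf δ B) := by
  exact not_mem_clDelta_iff_indep' P δ hδ a B
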